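/- Let F be a field, H a nonzero finite-dimensional F-vector space, and G a group acting on H by linear automorphisms such that the only G-invariant linear subspaces of H are {0} and H. Let 𝓛 be a collection of linear subspaces of H that contains {0} and H, is closed under sum and intersection, and is G-invariant (if V ∈ 𝓛 and g ∈ G then gV ∈ 𝓛). Then 𝓛 is complemented: for every V ∈ 𝓛 there exists V' ∈ 𝓛 with V ∩ V' = {0} and V + V' = H. -/

import Mathlib

open Module

/-- **Lemma (split-lattice).**
Let `F` be a field, `H` a nonzero finite-dimensional `F`-vector space, and `G` a group acting
on `H` by linear automorphisms such that the only `G`-invariant subspaces of `H` are `{0}`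
and `H`.  Let `𝓛` be a `G`-invariant sublattice of the Grassmannian of `H` (a collection of
subspaces containing `{0}` and `H`, closed under sum and intersection, and stable under `G`).
Then `𝓛` is complemented: every `V ∈ 𝓛` admits `V' ∈ 𝓛` with `V ⊕ V' = H`. -/
theorem stmt_8 {F H G : Type*} [Field F] [AddCommGroup H] [Module F H]
    [FiniteDimensional F H] [Group G]
    (hH : 0 < finrank F H)
    (ρ : G →* (H ≃ₗ[F] H))
    (hirr : ∀ U : Submodule F H, (∀ g : G, U.map (ρ g : H →ₗ[F] H) ≤ U) → U = ⊥ ∨ U = ⊤)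
    (L : Set (Submodule F H))
    (hbot : ⊥ ∈ L) (htop : ⊤ ∈ L)
    (hsup : ∀ V ∈ L, ∀ W ∈ L, V ⊔ W ∈ L)
    (hinf : ∀ V ∈ L, ∀ W ∈ L, V ⊓ W ∈ L)
    (hG : ∀ g : G, ∀ V ∈ L, V.map (ρ g : H →ₗ[F] H) ∈ L) :
    ∀ V ∈ L, ∃ V' ∈ L, V ⊓ V' = ⊥ ∧ V ⊔ V' = ⊤ := by
  classical
  intro V hV
  have htopne : (⊤ : Submodule F H) ≠ ⊥ := by
    intro h
    have : finrank F (⊤ : Submodule F H) = 0 := by rw [h, finrank_bot]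
    rw [finrank_top] at this
    omega
  -- a minimal nonzero element of L
  set t : Set ℕ := {n | ∃ M ∈ L, M ≠ ⊥ ∧ finrank F M = n} with ht
  have tne : t.Nonempty := ⟨finrank F (⊤ : Submodule F H), ⊤, htop, htopne, rfl⟩
  obtain ⟨M, hM, hMne, hMrank⟩ := Nat.sInf_mem tne
  have hMmin : ∀ U ∈ L, U ≠ ⊥ → finrank F M ≤ finrank F U := by
    intro U hU hUne
    rw [hMrank]
    exact Nat.sInf_le ⟨U, hU, hUne, rfl⟩
  -- fact A : if gM ⊄ W then gM ⊓ W = ⊥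
  have factA : ∀ (g : G), ∀ W ∈ L, ¬ M.map (ρ g : H →ₗ[F] H) ≤ W →
      M.map (ρ g : H →ₗ[F] H) ⊓ W = ⊥ := by
    intro g W hW hle
    by_contra hne
    have hP : M.map (ρ g : H →ₗ[F] H) ⊓ W ∈ L := hinf _ (hG g M hM) W hW
    have h1 : finrank F M ≤ finrank F ↥(M.map (ρ g : H →ₗ[F] H) ⊓ W) := hMmin _ hP hne
    have h2 : finrank F (M.map ((ρ g : H ≃ₗ[F] H) : H →ₗ[F] H)) = finrank F M :=
      LinearEquiv.finrank_map_eq (ρ g) M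
    have h3 : M.map (ρ g : H →ₗ[F] H) ⊓ W = M.map (ρ g : H →ₗ[F] H) := by
      apply Submodule.eq_of_le_of_finrank_le inf_le_left
      omega
    exact hle (h3 ▸ inf_le_right)
  -- fact B : if all translates of M lie in W ∈ L, then W = ⊤
  have factB : ∀ W ∈ L, (∀ g : G, M.map (ρ g : H →ₗ[F] H) ≤ W) → W = ⊤ := by
    intro W hW hle
    set U : Submodule F H := ⨆ g : G, M.map (ρ g : H →ₗ[F] H) with hU
    have hUW : U ≤ W := iSup_le hle
    have hUinv : ∀ g : G, U.map (ρ g : H →ₗ[F] H) ≤ U := by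
      intro g
      rw [hU, Submodule.map_iSup]
      apply iSup_le
      intro g'
      rw [← Submodule.map_comp]
      have : ((ρ g : H →ₗ[F] H).comp (ρ g' : H →ₗ[F] H)) = (ρ (g * g') : H →ₗ[F] H) := by
        ext x; simp [LinearMap.comp_apply]
      rw [this]
      exact le_iSup (fun g : G => M.map (ρ g : H →ₗ[F] H)) (g * g')
    have hUne : U ≠ ⊥ := by
      intro h
      apply hMne
      have hMle : M ≤ U := by
        have : M.map (ρ (1 : G) : H →ₗ[F] H) ≤ U :=
          le_iSup (fun g : G => M.map (ρ g : H →ₗ[F] H)) 1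
        simpa using this
      rw [h, le_bot_iff] at hMle
      exact hMle
    rcases hirr U hUinv with h | h
    · exact absurd h hUne
    · exact top_unique (h ▸ hUW)
  -- main argument: maximal element of L intersecting V trivially
  set s : Set ℕ := {n | ∃ W ∈ L, V ⊓ W = ⊥ ∧ finrank F W = n} with hs
  have sne : s.Nonempty := ⟨0, ⊥, hbot, by simp, by simp⟩
  have sbd : BddAbove s := by
    refine ⟨finrank F H, ?_⟩
    rintro n ⟨W, -, -, rfl⟩
    exact Submodule.finrank_le W
  obtain ⟨V', hV', hVV', hVrank⟩ := Nat.sSup_mem sne sbd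
  refine ⟨V', hV', hVV', ?_⟩
  by_contra hne
  have hWmem : V ⊔ V' ∈ L := hsup V hV V' hV'
  have hgex : ∃ g : G, ¬ M.map (ρ g : H →ₗ[F] H) ≤ V ⊔ V' := by
    by_contra h
    push_neg at h
    exact hne (factB _ hWmem h)
  obtain ⟨g, hg⟩ := hgex
  have hinf0 : M.map (ρ g : H →ₗ[F] H) ⊓ (V ⊔ V') = ⊥ := factA g _ hWmem hg
  set N : Submodule F H := M.map (ρ g : H →ₗ[F] H) with hN
  have hNmem : N ∈ L := hG g M hM
  have hNrank : finrank F N = finrank F M := LinearEquiv.finrank_map_eq (ρ g) M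
  have hNne : N ≠ ⊥ := by
    intro h
    exact hMne (Submodule.map_injective_of_injective (ρ g).injective (by rw [Submodule.map_bot]; exact h))
  have hV'N : V' ⊓ N = ⊥ := by
    rw [eq_bot_iff]
    intro x hx
    have : x ∈ N ⊓ (V ⊔ V') := ⟨hx.2, Submodule.mem_sup_right hx.1⟩
    rw [hinf0] at this
    exact this
  have h1 : V ⊓ (V' ⊔ N) = ⊥ := by
    rw [eq_bot_iff]
    rintro x ⟨hxV, hx⟩
    obtain ⟨y, hy, z, hz, rfl⟩ := Submodule.mem_sup.mp hx
    have hzW : z ∈ N ⊓ (V ⊔ V') := by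
      refine ⟨hz, ?_⟩
      have hzz : z = (y + z) - y := (add_sub_cancel_left y z).symm
      rw [hzz]
      exact sub_mem (Submodule.mem_sup_left hxV) (Submodule.mem_sup_right hy)
    rw [hinf0] at hzW
    have hz0 : z = 0 := hzW
    subst hz0
    have : y + 0 ∈ V ⊓ V' := ⟨hxV, by simpa using hy⟩
    rw [hVV'] at this
    exact this
  have hmem : finrank F (V' ⊔ N : Submodule F H) ∈ s :=
    ⟨V' ⊔ N, hsup V' hV' N hNmem, h1, rfl⟩
  have hle : finrank F (V' ⊔ N : Submodule F H) ≤ finrank F V' := hVrank ▸ le_csSup sbd hmem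
  have heq : finrank F (V' ⊔ N : Submodule F H) + finrank F (V' ⊓ N : Submodule F H)
      = finrank F V' + finrank F N := Submodule.finrank_sup_add_finrank_inf_eq V' N
  have hNpos : 0 < finrank F N := by
    rw [hNrank]
    have := hMmin N hNmem hNne
    rcases Nat.eq_zero_or_pos (finrank F M) with h | h
    · exfalso
      exact hNne (Submodule.finrank_eq_zero.mp (by omega))
    · exact h
  rw [hV'N, finrank_bot] at heq
  omega
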